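/- Fix integers κ ≥ 1 and n ≥ 2, and write n - 1 = κq + r with 1 ≤ r ≤ κ. Among all finite sequences (n_0, n_1, …, n_d) of positive integers with n_0 = 1, n_i ≥ κ for all 1 ≤ i ≤ d-1, and Σ_{i=0}^d n_i = n, the quantity F = Σ_{i=0}^d i·n_i is maximized uniquely by the sequence (1, κ, κ, …, κ, r) in which the entry κ appears exactly q times. -/

import Mathlib

open Finset

set_option maxHeartbeats 1000000

private lemma abel_aux (g : ℕ → ℕ) (m : ℕ) :
    (∑ j ∈ range m, ∑ i ∈ range (j + 1), g i) + ∑ i ∈ range m, i * g i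
      = m * ∑ i ∈ range m, g i := by
  induction m with
  | zero => simp
  | succ m ih =>
    simp only [sum_range_succ] at ih ⊢
    ring_nf at ih ⊢
    linarith [ih]

/-- Among finite sequences `(n_0,…,n_d)` of positive integers with `n_0 = 1`,
interior entries at least `κ`, and total sum `n = κq + r + 1` (`1 ≤ r ≤ κ`),
the quantity `F = Σ i·n_i` is uniquely maximized by `(1, κ, …, κ, r)` with `q`
copies of `κ`, whose `F`-value is `κ·q(q+1)/2 + r(q+1)` (stated doubled to stay
in `ℕ`). -/
theorem max_F_distance_sequence (k n q r : ℕ) (hk : 1 ≤ k)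
    (hr1 : 1 ≤ r) (hrk : r ≤ k) (hn : n = k * q + r + 1) (hn2 : k + 2 ≤ n)
    (d : ℕ) (f : Fin (d + 1) → ℕ)
    (hpos : ∀ i, 0 < f i) (h0 : f 0 = 1)
    (hint : ∀ i : Fin (d + 1), 1 ≤ i.val → i.val < d → k ≤ f i)
    (hsum : ∑ i, f i = n) :
    2 * (∑ i : Fin (d + 1), i.val * f i) ≤ k * q * (q + 1) + 2 * r * (q + 1) ∧
      (2 * (∑ i : Fin (d + 1), i.val * f i) = k * q * (q + 1) + 2 * r * (q + 1) →
        d = q + 1 ∧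
          ∀ i : Fin (d + 1),
            f i = if i.val = 0 then 1 else if i.val ≤ q then k else r) := by
  classical
  subst hn
  -- translate f to a function on ℕ
  set g : ℕ → ℕ := fun i => if h : i < d + 1 then f ⟨i, h⟩ else 0 with hg
  have hfg : ∀ i : Fin (d + 1), f i = g i.val := by
    intro i; simp [hg, i.isLt]; exact fun h => absurd i.isLt (by omega)
  have hsum' : ∑ i ∈ range (d + 1), g i = k * q + r + 1 := by
    rw [← Fin.sum_univ_eq_sum_range g (d + 1), ← hsum]
    exact Finset.sum_congr rfl fun i _ => (hfg i).symm
  have hF : (∑ i : Fin (d + 1), i.val * f i) = ∑ i ∈ range (d + 1), i * g i := by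
    rw [← Fin.sum_univ_eq_sum_range (fun i => i * g i) (d + 1)]
    exact Finset.sum_congr rfl fun i _ => by rw [hfg i]
  have hg0 : g 0 = 1 := by
    show (if h : 0 < d + 1 then f ⟨0, h⟩ else 0) = 1
    rw [dif_pos (Nat.succ_pos d)]; exact h0
  have hgk : ∀ i, 1 ≤ i → i < d → k ≤ g i := by
    intro i h1 h2
    have hi : i < d + 1 := by omega
    show k ≤ (if h : i < d + 1 then f ⟨i, h⟩ else 0)
    rw [dif_pos hi]
    exact hint ⟨i, hi⟩ h1 h2
  have hgd1 : 1 ≤ g d := by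
    show 1 ≤ (if h : d < d + 1 then f ⟨d, h⟩ else 0)
    rw [dif_pos (Nat.lt_succ_self d)]
    exact hpos _
  -- prefix sum lower bounds
  have hS : ∀ j, j < d → 1 + j * k ≤ ∑ i ∈ range (j + 1), g i := by
    intro j hj
    have hsplit : ∑ i ∈ range (j + 1), g i = g 0 + ∑ i ∈ Ico 1 (j + 1), g i := by
      rw [range_eq_Ico, Finset.sum_eq_sum_Ico_succ_bot (by omega)]
    have hcard : (Ico 1 (j + 1)).card = j := by simp
    have hlb : (Ico 1 (j + 1)).card • k ≤ ∑ i ∈ Ico 1 (j + 1), g i := by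
      apply Finset.card_nsmul_le_sum
      intro i hi
      rw [Finset.mem_Ico] at hi
      exact hgk i hi.1 (by omega)
    rw [hcard, smul_eq_mul] at hlb
    omega
  -- d ≥ 1
  have hd1 : 1 ≤ d := by
    by_contra hd
    have hd0 : d = 0 := by omega
    subst hd0
    simp [sum_range_succ] at hsum'
    omega
  obtain ⟨e, rfl⟩ : ∃ e, d = e + 1 := ⟨d - 1, by omega⟩
  -- d ≤ q + 1, i.e. e ≤ q
  have heq1 : e ≤ q := by
    have h1 := hS e (by omega)
    have h2 : ∑ i ∈ range (e + 2), g i = k * q + r + 1 := hsum'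
    rw [sum_range_succ] at h2
    by_contra hcon
    have hq1 : q + 1 ≤ e := by omega
    have hmul := Nat.mul_le_mul_right k hq1
    have hqk : (q + 1) * k = q * k + k := by ring
    have hkq : k * q = q * k := Nat.mul_comm k q
    omega
  obtain ⟨c, rfl⟩ : ∃ c, q = e + c := ⟨q - e, by omega⟩
  -- Abel identity
  have habel := abel_aux g (e + 2)
  rw [sum_range_succ (fun j => ∑ i ∈ range (j + 1), g i) (e + 1), hsum'] at habel
  set A := ∑ j ∈ range (e + 1), ∑ i ∈ range (j + 1), g i with hA
  set F' := ∑ i ∈ range (e + 2), i * g i with hF'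
  set L := ∑ j ∈ range (e + 1), (1 + j * k) with hL
  have hAL : L ≤ A := by
    apply Finset.sum_le_sum
    intro j hj
    rw [Finset.mem_range] at hj
    exact hS j (by omega)
  have hL2 : 2 * L = 2 * (e + 1) + k * ((e + 1) * e) := by
    rw [hL, Finset.sum_add_distrib]
    simp only [Finset.sum_const, Finset.card_range, smul_eq_mul, mul_one]
    have hgauss := Finset.sum_range_id_mul_two (e + 1)
    simp only [Nat.add_sub_cancel] at hgauss
    have h3 : (∑ j ∈ range (e + 1), j) * 2 * k = (e + 1) * e * k := by rw [hgauss]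
    have h4 : ∑ j ∈ range (e + 1), j * k = (∑ j ∈ range (e + 1), j) * k := by
      rw [Finset.sum_mul]
    rw [h4]
    ring_nf
    ring_nf at h3
    linarith [h3]
  have hkey : 2 * F' + 2 * L ≤ 2 * (e + 1) * (k * (e + c) + r + 1) := by
    ring_nf
    ring_nf at habel
    linarith [habel, hAL]
  have hcc : c ≤ c * c := by
    rcases Nat.eq_zero_or_pos c with h | h
    · simp [h]
    · exact Nat.le_mul_of_pos_left c h
  constructor
  · rw [hF]
    linarith [hkey, hL2, mul_le_mul_right hcc k, Nat.zero_le (2 * (r * c))]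
  · intro heqF
    rw [hF] at heqF
    -- show c = 0
    have hc0 : c = 0 := by
      by_contra hc
      have hc1 : 1 ≤ c := by omega
      have hrc : c ≤ r * c := Nat.le_mul_of_pos_left c (by omega)
      linarith [hkey, hL2, mul_le_mul_right hcc k, heqF, hrc]
    subst hc0
    refine ⟨by omega, ?_⟩
    -- equality case: A = L
    have hAeq : A = L := by
      have h2 : 2 * A = 2 * L := by
        ring_nf
        ring_nf at habel heqF hL2
        linarith [habel, heqF, hL2]
      omega
    have hterm := (Finset.sum_eq_sum_iff_of_le (fun j hj => by
      rw [Finset.mem_range] at hj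
      exact hS j (by omega))).mp hAeq.symm
    have hgmid : ∀ j, 1 ≤ j → j ≤ e → g j = k := by
      intro j h1 h2
      obtain ⟨m, rfl⟩ : ∃ m, j = m + 1 := ⟨j - 1, by omega⟩
      have hm1 := hterm m (by simp; omega)
      have hm2 := hterm (m + 1) (by simp; omega)
      rw [sum_range_succ] at hm2
      have hmk : (m + 1) * k = m * k + k := by ring
      omega
    have hglast : g (e + 1) = r := by
      have hm1 := hterm e (by simp)
      have h2 : ∑ i ∈ range (e + 2), g i = k * (e + 0) + r + 1 := hsum'
      rw [sum_range_succ] at h2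
      have hek : e * k = k * e := Nat.mul_comm e k
      have hke : k * (e + 0) = k * e := by ring
      omega
    intro i
    rw [hfg i]
    have hilt : i.val < e + 2 := i.isLt
    split_ifs with h1 h2
    · rw [h1]; exact hg0
    · exact hgmid i.val (by omega) (by omega)
    · have hie : i.val = e + 1 := by omega
      rw [hie]; exact hglast
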